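/- Let (K,v) be a valued field of characteristic p > 0 with value group Γ_v, and suppose v(a−b) > α if and only if v(a^p − b^p) > pα for all a,b ∈ K and α ∈ Γ_v. Then for any n < ω, any a ∈ K^(p^n), and any α ∈ Γ_v, every element of K^(p^n) can be written as (x−a)/(y−a) with x,y ∈ B(α;a) ∩ K^(p^n) and y ≠ a. -/

import Mathlib

/-- In a nontrivially valued field of characteristic `p > 0` (where Frobenius
scales the valuation: `v(a-b) > α ↔ v(a^p-b^p) > pα`), for any `n`, any `a ∈ K^(p^n)` and
any `α` in the value group, every `z ∈ K^(p^n)` can be written as `(x-a)/(y-a)` with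
`x, y ∈ B(α;a) ∩ K^(p^n)` and `y ≠ a`. -/
theorem mem_p_pow_field_eq_ratio_from_ball
    (p : ℕ) (hp : p.Prime) (K : Type*) [Field K] [CharP K p]
    (Γ : Type*) [AddCommGroup Γ] [LinearOrder Γ] [IsOrderedAddMonoid Γ]
    (v : AddValuation K (WithTop Γ))
    (hnontriv : ∀ γ : Γ, ∃ y : K, y ≠ 0 ∧ (γ : WithTop Γ) < v y)
    (hfrob : ∀ (a b : K) (α : Γ),
      (α : WithTop Γ) < v (a - b) ↔ ((p • α : Γ) : WithTop Γ) < v (a ^ p - b ^ p))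
    (n : ℕ) (a : K) (ha : a ∈ Set.range fun x : K => x ^ p ^ n) (α : Γ)
    (z : K) (hz : z ∈ Set.range fun x : K => x ^ p ^ n) :
    ∃ x y : K, (α : WithTop Γ) < v (x - a) ∧ (α : WithTop Γ) < v (y - a) ∧
      (x ∈ Set.range fun w : K => w ^ p ^ n) ∧ (y ∈ Set.range fun w : K => w ^ p ^ n) ∧
      y ≠ a ∧ z = (x - a) / (y - a) := by
  haveI : Fact p.Prime := ⟨hp⟩
  obtain ⟨b, rfl⟩ := ha
  obtain ⟨c, rfl⟩ := hz
  simp only []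
  -- choose a lower bound γ for v t
  by_cases hc : c = 0
  · -- z = 0 : take x = a
    obtain ⟨t, ht0, htv⟩ := hnontriv (max α 0)
    have htne : v t ≠ ⊤ := v.ne_top_iff.2 ht0
    obtain ⟨β, hβ⟩ := WithTop.ne_top_iff_exists.1 htne
    have hβgt : max α 0 < β := by
      rw [← WithTop.coe_lt_coe, hβ]; exact htv
    have hβ0 : 0 ≤ β := le_of_lt (lt_of_le_of_lt (le_max_right _ _) hβgt)
    have hβα : α < β := lt_of_le_of_lt (le_max_left _ _) hβgt
    have hpow : (α : WithTop Γ) < v (t ^ p ^ n) := by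
      rw [v.map_pow, ← hβ, ← WithTop.coe_nsmul, WithTop.coe_lt_coe]
      calc α < β := hβα
        _ = 1 • β := (one_nsmul β).symm
        _ ≤ p ^ n • β := nsmul_le_nsmul_left hβ0 (Nat.one_le_iff_ne_zero.2
              (pow_ne_zero n hp.ne_zero))
    have htpn : t ^ p ^ n ≠ 0 := pow_ne_zero _ ht0
    refine ⟨b ^ p ^ n, (b + t) ^ p ^ n, ?_, ?_, ⟨b, rfl⟩, ⟨b + t, rfl⟩, ?_, ?_⟩
    · simp [v.map_zero]
    · rw [add_pow_char_pow, add_sub_cancel_left]; exact hpow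
    · rw [add_pow_char_pow]; intro h
      exact htpn (by linear_combination h)
    · rw [add_pow_char_pow, add_sub_cancel_left, sub_self, zero_div, hc,
        zero_pow (pow_ne_zero n hp.ne_zero)]
  · -- z ≠ 0
    have hzne : c ^ p ^ n ≠ 0 := pow_ne_zero _ hc
    have hvz : v (c ^ p ^ n) ≠ ⊤ := v.ne_top_iff.2 hzne
    obtain ⟨γz, hγz⟩ := WithTop.ne_top_iff_exists.1 hvz
    obtain ⟨t, ht0, htv⟩ := hnontriv (max (max α 0) (α - γz))
    have htne : v t ≠ ⊤ := v.ne_top_iff.2 ht0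
    obtain ⟨β, hβ⟩ := WithTop.ne_top_iff_exists.1 htne
    have hβgt : max (max α 0) (α - γz) < β := by
      rw [← WithTop.coe_lt_coe, hβ]; exact htv
    have hβ0 : 0 ≤ β :=
      le_of_lt (lt_of_le_of_lt (le_trans (le_max_right _ _) (le_max_left _ _)) hβgt)
    have hβα : α < β := lt_of_le_of_lt (le_trans (le_max_left _ _) (le_max_left _ _)) hβgt
    have hβz : α - γz < β := lt_of_le_of_lt (le_max_right _ _) hβgt
    have hle : β ≤ p ^ n • β :=
      calc β = 1 • β := (one_nsmul β).symm
        _ ≤ p ^ n • β := nsmul_le_nsmul_left hβ0 (Nat.one_le_iff_ne_zero.2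
              (pow_ne_zero n hp.ne_zero))
    have hpow : (α : WithTop Γ) < v (t ^ p ^ n) := by
      rw [v.map_pow, ← hβ, ← WithTop.coe_nsmul, WithTop.coe_lt_coe]
      exact lt_of_lt_of_le hβα hle
    have htpn : t ^ p ^ n ≠ 0 := pow_ne_zero _ ht0
    refine ⟨(b + c * t) ^ p ^ n, (b + t) ^ p ^ n, ?_, ?_, ⟨b + c * t, rfl⟩, ⟨b + t, rfl⟩, ?_, ?_⟩
    · rw [add_pow_char_pow, add_sub_cancel_left, mul_pow, v.map_mul, ← hγz, v.map_pow, ← hβ, ← WithTop.coe_nsmul, ← WithTop.coe_add, WithTop.coe_lt_coe]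
      have h2 : α - γz < p ^ n • β := lt_of_lt_of_le hβz hle
      calc α = γz + (α - γz) := by abel
        _ < γz + p ^ n • β := add_lt_add_right h2 γz
    · rw [add_pow_char_pow, add_sub_cancel_left]; exact hpow
    · rw [add_pow_char_pow]; intro h
      exact htpn (by linear_combination h)
    · rw [add_pow_char_pow, add_pow_char_pow, add_sub_cancel_left, add_sub_cancel_left,
        mul_pow, mul_div_assoc, div_self htpn, mul_one]
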